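/- For every Boolean matrix M in {0,1}^{n×n}, the blocky rank of M (over the reals) is at most 2^{bc(M)}, where bc(M) is the blocky cover number of M. -/

import Mathlib

open Matrix MeasureTheory

/-- A blocky matrix: its support is a disjoint union of combinatorial rectangles,
with value 1 on the support and 0 elsewhere. -/
def IsBlocky {F : Type*} [Field F] {m n : Type*} (M : Matrix m n F) : Prop :=
  ∃ (k : ℕ) (S : Fin k → Finset m) (T : Fin k → Finset n),
    (∀ a b, a ≠ b → Disjoint (S a) (S b)) ∧
    (∀ a b, a ≠ b → Disjoint (T a) (T b)) ∧
    (∀ i j, (∃ l, i ∈ S l ∧ j ∈ T l) → M i j = 1) ∧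
    (∀ i j, (¬ ∃ l, i ∈ S l ∧ j ∈ T l) → M i j = 0)

/-- A spiky matrix: the entrywise product of a blocky matrix and a rank-one matrix. -/
def IsSpiky {F : Type*} [Field F] {m n : Type*} (M : Matrix m n F) : Prop :=
  ∃ (B : Matrix m n F) (u : m → F) (v : n → F),
    IsBlocky B ∧ ∀ i j, M i j = B i j * (u i * v j)

/-- The spiky rank: minimum number of spiky matrices summing to `M`. -/
noncomputable def spikyRank {F : Type*} [Field F] {m n : Type*} (M : Matrix m n F) : ℕ :=
  sInf {r | ∃ f : Fin r → Matrix m n F, (∀ i, IsSpiky (f i)) ∧ ∑ i, f i = M}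

/-- The blocky rank: minimum number of blocky matrices whose linear combination equals `M`. -/
noncomputable def blockyRank {F : Type*} [Field F] {m n : Type*} (M : Matrix m n F) : ℕ :=
  sInf {r | ∃ (f : Fin r → Matrix m n F) (c : Fin r → F),
    (∀ i, IsBlocky (f i)) ∧ ∑ i, c i • f i = M}

/-- Sparsity: the number of nonzero entries of a matrix. -/
noncomputable def matSparsity {F : Type*} [Zero F] {m n : Type*} (M : Matrix m n F) : ℕ :=
  {p : m × n | M p.1 p.2 ≠ 0}.ncard

/-- Rank-`r` rigidity: minimum number of entries that must be changed to bring the rank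
down to `r`. -/
noncomputable def rigidity {F : Type*} [Field F] {N : ℕ}
    (M : Matrix (Fin N) (Fin N) F) (r : ℕ) : ℕ :=
  sInf {s | ∃ A C : Matrix (Fin N) (Fin N) F, M = A + C ∧ A.rank ≤ r ∧ matSparsity C ≤ s}

/-- Sign spiky rank: minimum spiky rank over real matrices with the same sign pattern. -/
noncomputable def signSpikyRank {m n : Type*} (M : Matrix m n ℝ) : ℕ :=
  sInf {r | ∃ A : Matrix m n ℝ,
    (∀ i j, Real.sign (A i j) = Real.sign (M i j)) ∧ spikyRank A ≤ r}

/-- Blocky cover number: minimum number of blocky matrices whose supports' union is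
exactly the set of 1-entries of the Boolean matrix `M`. -/
noncomputable def blockyCover {m n : Type*} (M : Matrix m n ℝ) : ℕ :=
  sInf {k | ∃ f : Fin k → Matrix m n ℝ, (∀ l, IsBlocky (f l)) ∧
    ∀ i j, M i j = 1 ↔ ∃ l, f l i j = 1}
section Aux
variable {F : Type*} [Field F] {m n : Type*}

lemma isBlocky_of_index (M : Matrix m n F) {ι : Type*} [Fintype ι]
    (S : ι → Finset m) (T : ι → Finset n)
    (hS : ∀ a b, a ≠ b → Disjoint (S a) (S b))
    (hT : ∀ a b, a ≠ b → Disjoint (T a) (T b))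
    (h1 : ∀ i j, (∃ l, i ∈ S l ∧ j ∈ T l) → M i j = 1)
    (h0 : ∀ i j, (¬ ∃ l, i ∈ S l ∧ j ∈ T l) → M i j = 0) : IsBlocky M := by
  let e := (Fintype.equivFin ι).symm
  refine ⟨Fintype.card ι, S ∘ e, T ∘ e,
    fun a b hab => hS _ _ (fun h => hab (e.injective h)),
    fun a b hab => hT _ _ (fun h => hab (e.injective h)),
    fun i j h => h1 i j ?_, fun i j h => h0 i j ?_⟩
  · obtain ⟨l, hl⟩ := h; exact ⟨e l, hl⟩
  · rintro ⟨l, hl⟩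
    exact h ⟨e.symm l, by simpa [e] using hl⟩

lemma IsBlocky.entry01 {M : Matrix m n F} (h : IsBlocky M) (i : m) (j : n) :
    M i j = 0 ∨ M i j = 1 := by
  obtain ⟨k, S, T, _, _, h1, h0⟩ := h
  by_cases he : ∃ l, i ∈ S l ∧ j ∈ T l
  · exact Or.inr (h1 i j he)
  · exact Or.inl (h0 i j he)

lemma isBlocky_mul [DecidableEq m] [DecidableEq n] {A B : Matrix m n F}
    (hA : IsBlocky A) (hB : IsBlocky B) :
    IsBlocky (fun i j => A i j * B i j : Matrix m n F) := by
  obtain ⟨k1, S1, T1, hS1, hT1, hA1, hA0⟩ := hA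
  obtain ⟨k2, S2, T2, hS2, hT2, hB1, hB0⟩ := hB
  refine isBlocky_of_index _ (fun p : Fin k1 × Fin k2 => S1 p.1 ∩ S2 p.2)
    (fun p => T1 p.1 ∩ T2 p.2) ?_ ?_ ?_ ?_
  · rintro ⟨a1, a2⟩ ⟨b1, b2⟩ hab
    by_cases h : a1 = b1
    · subst h
      have : a2 ≠ b2 := fun h2 => hab (by simp [h2])
      exact Disjoint.mono (Finset.inter_subset_right) (Finset.inter_subset_right) (hS2 _ _ this)
    · exact Disjoint.mono (Finset.inter_subset_left) (Finset.inter_subset_left) (hS1 _ _ h)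
  · rintro ⟨a1, a2⟩ ⟨b1, b2⟩ hab
    by_cases h : a1 = b1
    · subst h
      have : a2 ≠ b2 := fun h2 => hab (by simp [h2])
      exact Disjoint.mono (Finset.inter_subset_right) (Finset.inter_subset_right) (hT2 _ _ this)
    · exact Disjoint.mono (Finset.inter_subset_left) (Finset.inter_subset_left) (hT1 _ _ h)
  · rintro i j ⟨⟨a, b⟩, hi, hj⟩
    simp only [Finset.mem_inter] at hi hj
    rw [hA1 i j ⟨a, hi.1, hj.1⟩, hB1 i j ⟨b, hi.2, hj.2⟩, one_mul]
  · rintro i j h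
    by_cases hA' : ∃ a, i ∈ S1 a ∧ j ∈ T1 a
    · by_cases hB' : ∃ b, i ∈ S2 b ∧ j ∈ T2 b
      · obtain ⟨a, ha⟩ := hA'; obtain ⟨b, hb⟩ := hB'
        exact absurd ⟨(a, b), by simp [ha.1, ha.2, hb.1, hb.2]⟩ h
      · rw [hB0 i j hB', mul_zero]
    · rw [hA0 i j hA', zero_mul]

lemma isBlocky_ones [Fintype m] [Fintype n] :
    IsBlocky (fun _ _ => (1 : F) : Matrix m n F) := by
  refine isBlocky_of_index _ (fun _ : Unit => Finset.univ) (fun _ => Finset.univ)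
    (fun a b hab => absurd rfl hab) (fun a b hab => absurd rfl hab)
    (fun i j _ => rfl) (fun i j h => absurd ⟨(), by simp⟩ h)

lemma isBlocky_prod [Fintype m] [Fintype n] [DecidableEq m] [DecidableEq n] {k : ℕ}
    (f : Fin k → Matrix m n F) (hf : ∀ l, IsBlocky (f l)) (s : Finset (Fin k)) :
    IsBlocky (fun i j => ∏ l ∈ s, f l i j : Matrix m n F) := by
  induction s using Finset.induction with
  | empty => simpa using (isBlocky_ones : IsBlocky (fun _ _ => (1 : F) : Matrix m n F))
  | @insert a s ha ih =>
    have := isBlocky_mul (hf a) ih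
    simpa [Finset.prod_insert ha] using this

end Aux

lemma incl_excl {k : ℕ} (x : Fin k → ℝ) :
    ∑ s : Finset (Fin k), (if s = ∅ then 0 else (-1:ℝ)^(s.card+1)) * ∏ l ∈ s, x l
      = 1 - ∏ l, (1 - x l) := by
  have hprod : ∏ l, (1 - x l) = ∑ s : Finset (Fin k), (-1:ℝ)^s.card * ∏ l ∈ s, x l := by
    have h := Finset.prod_add (fun l => -x l) (fun _ => (1:ℝ)) Finset.univ
    simp only [Finset.prod_const_one, mul_one, Finset.powerset_univ] at h
    have h2 : ∀ l, -x l + 1 = 1 - x l := fun l => by ring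
    simp only [h2] at h
    rw [h]
    refine Finset.sum_congr rfl fun s _ => ?_
    rw [show (fun l => -x l) = fun l => (-1:ℝ) * x l from funext fun l => by ring,
      Finset.prod_mul_distrib, Finset.prod_const]
  have hterm : ∀ s : Finset (Fin k),
      (if s = ∅ then 0 else (-1:ℝ)^(s.card+1)) * ∏ l ∈ s, x l
        = -((-1:ℝ)^s.card * ∏ l ∈ s, x l) + (if s = ∅ then 1 else 0) := by
    intro s
    by_cases hs : s = ∅
    · simp [hs]
    · simp only [hs, if_false, pow_succ]
      ring
  simp only [hterm]
  rw [Finset.sum_add_distrib, Finset.sum_neg_distrib, ← hprod]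
  simp
  ring


lemma blockyRank_le_card {F : Type*} [Field F] {m n : Type*} (M : Matrix m n F)
    {ι : Type*} [Fintype ι] (f : ι → Matrix m n F) (c : ι → F)
    (hb : ∀ i, IsBlocky (f i)) (h : ∑ i, c i • f i = M) :
    blockyRank M ≤ Fintype.card ι := by
  apply Nat.sInf_le
  let e := (Fintype.equivFin ι).symm
  refine ⟨f ∘ e, c ∘ e, fun i => hb _, ?_⟩
  rw [← h]
  exact Fintype.sum_equiv e _ _ (fun i => rfl)

lemma cover_nonempty {n : ℕ} (M : Matrix (Fin n) (Fin n) ℝ) :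
    ∃ k, ∃ f : Fin k → Matrix (Fin n) (Fin n) ℝ, (∀ l, IsBlocky (f l)) ∧
      ∀ i j, M i j = 1 ↔ ∃ l, f l i j = 1 := by
  classical
  refine ⟨n * n, fun p =>
    if M (finProdFinEquiv.symm p).1 (finProdFinEquiv.symm p).2 = 1 then
      (fun i j => if i = (finProdFinEquiv.symm p).1 ∧ j = (finProdFinEquiv.symm p).2
        then 1 else 0)
    else 0, ?_, ?_⟩
  · intro p
    by_cases hp : M (finProdFinEquiv.symm p).1 (finProdFinEquiv.symm p).2 = 1
    · simp only [hp, if_true]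
      refine isBlocky_of_index _ (fun _ : Unit => {(finProdFinEquiv.symm p).1})
        (fun _ => {(finProdFinEquiv.symm p).2})
        (fun a b hab => absurd rfl hab) (fun a b hab => absurd rfl hab) ?_ ?_
      · rintro i j ⟨_, hi, hj⟩
        simp only [Finset.mem_singleton] at hi hj
        simp [hi, hj]
      · intro i j h
        have : ¬ (i = (finProdFinEquiv.symm p).1 ∧ j = (finProdFinEquiv.symm p).2) := by
          rintro ⟨hi, hj⟩
          exact h ⟨(), by simp [hi, hj]⟩
        exact if_neg this
    · simp only [hp, if_false]
      exact isBlocky_of_index _ (fun x : Empty => x.elim) (fun x => x.elim)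
        (fun a => a.elim) (fun a => a.elim)
        (fun i j h => absurd h (by rintro ⟨l, -⟩; exact l.elim))
        (fun i j _ => rfl)
  · intro i j
    constructor
    · intro hM
      refine ⟨finProdFinEquiv (i, j), ?_⟩
      simp [hM]
    · rintro ⟨p, hp⟩
      by_cases hM : M (finProdFinEquiv.symm p).1 (finProdFinEquiv.symm p).2 = 1
      · replace hp : (if i = (finProdFinEquiv.symm p).1 ∧ j = (finProdFinEquiv.symm p).2 then (1:ℝ) else 0) = 1 :=
          (congrFun (congrFun (if_pos hM) i) j).symm.trans hp
        by_cases hij : i = (finProdFinEquiv.symm p).1 ∧ j = (finProdFinEquiv.symm p).2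
        · rw [hij.1, hij.2]; exact hM
        · rw [if_neg hij] at hp
          exact absurd hp (by norm_num)
      · replace hp : (0:ℝ) = 1 := (congrFun (congrFun (if_neg hM) i) j).symm.trans hp
        exact absurd hp (by norm_num)

/-- For a Boolean matrix, blocky rank is at most 2 ^ (blocky cover number). -/
theorem blockyRank_le_two_pow_blockyCover {n : ℕ}
    (M : Matrix (Fin n) (Fin n) ℝ) (hBool : ∀ i j, M i j = 0 ∨ M i j = 1) :
    blockyRank M ≤ 2 ^ blockyCover M := by
  classical
  have hmem : blockyCover M ∈ {k | ∃ f : Fin k → Matrix (Fin n) (Fin n) ℝ,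
      (∀ l, IsBlocky (f l)) ∧ ∀ i j, M i j = 1 ↔ ∃ l, f l i j = 1} := by
    obtain ⟨k0, hk0⟩ := cover_nonempty M
    exact Nat.sInf_mem ⟨k0, hk0⟩
  obtain ⟨f, hf, hcov⟩ := hmem
  have hsum : ∑ s : Finset (Fin (blockyCover M)),
      (if s = ∅ then (0:ℝ) else (-1:ℝ)^(s.card+1)) •
        (fun i j => ∏ l ∈ s, f l i j : Matrix (Fin n) (Fin n) ℝ) = M := by
    funext i j
    simp only [Finset.sum_apply, Pi.smul_apply, Matrix.sum_apply, Matrix.smul_apply, smul_eq_mul]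
    rw [incl_excl (fun l => f l i j)]
    by_cases h : ∃ l, f l i j = 1
    · have hM : M i j = 1 := (hcov i j).2 h
      obtain ⟨l, hl⟩ := h
      rw [hM, Finset.prod_eq_zero (Finset.mem_univ l) (by rw [hl]; ring)]
      ring
    · have h0 : ∀ l, f l i j = 0 :=
        fun l => ((hf l).entry01 i j).resolve_right (fun he => h ⟨l, he⟩)
      have hM : M i j = 0 := by
        rcases hBool i j with h' | h'
        · exact h'
        · exact absurd ((hcov i j).1 h') h
      rw [hM]
      simp [h0]
  calc blockyRank M ≤ Fintype.card (Finset (Fin (blockyCover M))) :=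
        blockyRank_le_card M _ _ (fun s => isBlocky_prod f hf s) hsum
    _ = 2 ^ blockyCover M := by simp
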